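/- arXiv:0901.1140 — 7 statements merged into one kernel-verified Lean document; each statement's English description precedes it below -/
import Mathlib

section
/- Let (p*, Opt) be an optimal solution of the pricing instance, where Opt = {j : p*(I_j) ≤ B_j} is the set of customers who can afford their bundle under p*, let B_max = max_j B_j, and let ε > 0. Set δ = ε·B_max/(nm) and P = ⌈nm/ε⌉. Then there exists a pricing p̃ assigning each item a price from the grid {0, δ, 2δ, …, Pδ} such that (i) p̃(I_j) ≤ B_j/(1+ε) for every j ∈ Opt, and (ii) Σ_{j∈Opt} p̃(I_j) ≥ (1−2ε)·Σ_{j∈Opt} p*(I_j). -/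
/-- Proposition 1, ε-optimal prices.
Given a pricing instance with `n ≥ 1` items `E`, `m ≥ 1` customers with nonempty
bundles `I j` and budgets `B j ≥ 0`, an optimal pricing `pstar`, `Bmax = max_j B j`,
and `ε > 0`, set `δ = ε * Bmax / (n * m)` and `P = ⌈n * m / ε⌉`. Then there is a
pricing `ptilde` taking values in the grid `{0, δ, 2δ, …, Pδ}` such that
(i) `ptilde(I j) ≤ B j / (1 + ε)` for every `j` in `Opt = {j : pstar(I j) ≤ B j}`, and
(ii) `∑_{j ∈ Opt} ptilde(I j) ≥ (1 - 2ε) ∑_{j ∈ Opt} pstar(I j)`. -/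
theorem epsilon_optimal_prices
    (E : Type*) [Fintype E] (hn : 1 ≤ Fintype.card E)
    (m : ℕ) (hm : 1 ≤ m)
    (I : Fin m → Finset E) (hI : ∀ j, (I j).Nonempty)
    (B : Fin m → ℝ) (hB : ∀ j, 0 ≤ B j)
    (Bmax : ℝ) (hBmax : IsGreatest (Set.range B) Bmax)
    (pstar : E → ℝ) (hpstar : ∀ e, 0 ≤ pstar e)
    (hopt : ∀ p : E → ℝ, (∀ e, 0 ≤ p e) →
      (∑ j, if ∑ e ∈ I j, p e ≤ B j then ∑ e ∈ I j, p e else 0) ≤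
        ∑ j, if ∑ e ∈ I j, pstar e ≤ B j then ∑ e ∈ I j, pstar e else 0)
    (ε : ℝ) (hε : 0 < ε) :
    ∃ ptilde : E → ℝ,
      (∀ e : E, ∃ k : ℕ,
          (k : ℤ) ≤ ⌈((Fintype.card E * m : ℕ) : ℝ) / ε⌉ ∧
          ptilde e = (k : ℝ) * (ε * Bmax / ((Fintype.card E * m : ℕ) : ℝ))) ∧
      (∀ j : Fin m, ∑ e ∈ I j, pstar e ≤ B j →
          ∑ e ∈ I j, ptilde e ≤ B j / (1 + ε)) ∧
      (1 - 2 * ε) *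
          (∑ j ∈ Finset.univ.filter (fun j => ∑ e ∈ I j, pstar e ≤ B j),
            ∑ e ∈ I j, pstar e) ≤
        ∑ j ∈ Finset.univ.filter (fun j => ∑ e ∈ I j, pstar e ≤ B j),
          ∑ e ∈ I j, ptilde e := by
  classical
  obtain ⟨⟨j0, hj0⟩, hUB⟩ := hBmax
  have hBmax0 : 0 ≤ Bmax := hj0 ▸ hB j0
  have h1ε : (0:ℝ) < 1 + ε := by linarith
  set N : ℝ := ((Fintype.card E * m : ℕ) : ℝ) with hNdef
  have hNpos : (0:ℝ) < N := by
    have h : 0 < Fintype.card E * m := Nat.mul_pos hn hm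
    rw [hNdef]; exact_mod_cast h
  set δ : ℝ := ε * Bmax / N with hδdef
  -- shorthand for the optimum set and value
  set Opt := Finset.univ.filter (fun j => ∑ e ∈ I j, pstar e ≤ B j) with hOpt
  set S : ℝ := ∑ j ∈ Opt, ∑ e ∈ I j, pstar e with hSdef
  have hceil0 : (0:ℤ) ≤ ⌈N / ε⌉ := by
    have : (0:ℝ) ≤ N / ε := by positivity
    exact Int.ceil_nonneg this
  by_cases hB0 : Bmax = 0
  · -- degenerate case: all budgets are 0
    refine ⟨fun _ => 0, ?_, ?_, ?_⟩
    · intro e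
      exact ⟨0, by exact_mod_cast hceil0, by simp⟩
    · intro j _
      simp only [Finset.sum_const, smul_zero]
      exact div_nonneg (hB j) h1ε.le
    · have hS0 : S = 0 := by
        rw [hSdef]
        apply Finset.sum_eq_zero
        intro j hj
        have hj' : ∑ e ∈ I j, pstar e ≤ B j := (Finset.mem_filter.1 hj).2
        have hBj : B j ≤ 0 := by
          have := hUB ⟨j, rfl⟩
          simpa [hB0] using this
        have h0 : 0 ≤ ∑ e ∈ I j, pstar e :=
          Finset.sum_nonneg fun e _ => hpstar e
        linarith
      simp only [← hSdef, ← hOpt, hS0, mul_zero]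
      simp
  · have hBpos : 0 < Bmax := lt_of_le_of_ne hBmax0 (Ne.symm hB0)
    have hδpos : 0 < δ := by rw [hδdef]; positivity
    set q : E → ℝ := fun e => min (pstar e) Bmax with hq
    have hqnn : ∀ e, 0 ≤ q e := fun e => le_min (hpstar e) hBmax0
    set x : E → ℝ := fun e => q e / ((1 + ε) * δ) with hx
    have hxnn : ∀ e, 0 ≤ x e := fun e => by
      have := hqnn e; positivity
    set k : E → ℕ := fun e => (⌊x e⌋).toNat with hk
    have hkcast : ∀ e, ((k e : ℕ) : ℝ) = (⌊x e⌋ : ℝ) := by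
      intro e
      have : (0:ℤ) ≤ ⌊x e⌋ := Int.floor_nonneg.2 (hxnn e)
      rw [hk]
      exact_mod_cast Int.toNat_of_nonneg this
    set ptilde : E → ℝ := fun e => (k e : ℝ) * δ with hpt
    have hxδ : ∀ e, x e * ((1 + ε) * δ) = q e := by
      intro e
      rw [hx]
      field_simp
    -- upper bound : ptilde e ≤ q e / (1+ε)
    have hub : ∀ e, ptilde e ≤ q e / (1 + ε) := by
      intro e
      have h1 : (⌊x e⌋ : ℝ) ≤ x e := Int.floor_le _
      have h2 : (k e : ℝ) * δ ≤ x e * δ := by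
        rw [hkcast e]
        exact mul_le_mul_of_nonneg_right h1 hδpos.le
      have h3 : x e * δ = q e / (1 + ε) := by
        rw [hx]; field_simp
      rw [hpt]; rw [h3] at h2; exact h2
    -- lower bound : q e/(1+ε) - δ ≤ ptilde e
    have hlb : ∀ e, q e / (1 + ε) - δ ≤ ptilde e := by
      intro e
      have h1 : x e - 1 < (⌊x e⌋ : ℝ) := Int.sub_one_lt_floor _
      have h2 : (x e - 1) * δ ≤ (k e : ℝ) * δ := by
        rw [hkcast e]
        exact mul_le_mul_of_nonneg_right h1.le hδpos.le
      have h3 : (x e - 1) * δ = q e / (1 + ε) - δ := by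
        rw [hx]; field_simp
      rw [hpt]; rw [h3] at h2; exact h2
    -- the grid condition
    have hgrid : ∀ e : E, ∃ kk : ℕ, (kk : ℤ) ≤ ⌈N / ε⌉ ∧ ptilde e = (kk : ℝ) * δ := by
      intro e
      refine ⟨k e, ?_, rfl⟩
      have hxle : x e ≤ N / ε := by
        have hq' : q e ≤ Bmax := min_le_right _ _
        have key : N * ((1 + ε) * δ) = (1 + ε) * (ε * Bmax) := by
          rw [hδdef]; field_simp
        show q e / ((1 + ε) * δ) ≤ N / ε
        rw [div_le_div_iff₀ (by positivity) hε, key]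
        nlinarith [mul_le_mul_of_nonneg_right hq' hε.le,
          mul_nonneg (mul_nonneg hε.le hε.le) hBmax0]
      have : ((⌊x e⌋ : ℤ) : ℝ) ≤ ((⌈N / ε⌉ : ℤ) : ℝ) :=
        le_trans (Int.floor_le _) (le_trans hxle (Int.le_ceil _))
      have h4 : ⌊x e⌋ ≤ ⌈N / ε⌉ := by exact_mod_cast this
      have h5 : ((k e : ℕ) : ℤ) = ⌊x e⌋ :=
        Int.toNat_of_nonneg (Int.floor_nonneg.2 (hxnn e))
      rw [h5]; exact h4
    -- condition (i)
    have hcondI : ∀ j : Fin m, ∑ e ∈ I j, pstar e ≤ B j →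
        ∑ e ∈ I j, ptilde e ≤ B j / (1 + ε) := by
      intro j hj
      have h1 : ∑ e ∈ I j, ptilde e ≤ ∑ e ∈ I j, pstar e / (1 + ε) := by
        apply Finset.sum_le_sum
        intro e _
        refine le_trans (hub e) ?_
        apply div_le_div_of_nonneg_right ?_ h1ε.le
        exact min_le_left _ _
      rw [← Finset.sum_div] at h1
      exact le_trans h1 (div_le_div_of_nonneg_right hj h1ε.le)
    -- optimum profit is at least Bmax
    have hSBmax : Bmax ≤ S := by
      have hc : (0:ℝ) < ((I j0).card : ℝ) := by
        exact_mod_cast Finset.card_pos.2 (hI j0)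
      set p : E → ℝ := fun _ => Bmax / ((I j0).card : ℝ) with hpdef
      have hp : ∀ e, 0 ≤ p e := fun e => by rw [hpdef]; positivity
      have hsum : ∑ e ∈ I j0, p e = Bmax := by
        rw [hpdef]
        rw [Finset.sum_const, nsmul_eq_mul]
        field_simp
      have hterm : ∀ j : Fin m, 0 ≤ (if ∑ e ∈ I j, p e ≤ B j then ∑ e ∈ I j, p e else 0) := by
        intro j
        split_ifs
        · exact Finset.sum_nonneg fun e _ => hp e
        · exact le_rfl
      have h1 : Bmax ≤ ∑ j, if ∑ e ∈ I j, p e ≤ B j then ∑ e ∈ I j, p e else 0 := by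
        have h0 := Finset.single_le_sum (f := fun j => if ∑ e ∈ I j, p e ≤ B j then ∑ e ∈ I j, p e else 0)
          (fun j _ => hterm j) (Finset.mem_univ j0)
        rw [hsum, hj0] at h0
        simpa using h0
      have h2 := hopt p hp
      rw [hSdef, hOpt, Finset.sum_filter]
      exact le_trans h1 h2
    have hS0 : 0 ≤ S := le_trans hBmax0 hSBmax
    refine ⟨ptilde, hgrid, hcondI, ?_⟩
    -- condition (ii)
    have hper : ∀ j ∈ Opt,
        (∑ e ∈ I j, pstar e) / (1 + ε) - (Fintype.card E : ℝ) * δ ≤ ∑ e ∈ I j, ptilde e := by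
      intro j hj
      have hjB : ∑ e ∈ I j, pstar e ≤ B j := (Finset.mem_filter.1 hj).2
      have hqeq : ∀ e ∈ I j, q e = pstar e := by
        intro e he
        have h1 : pstar e ≤ ∑ e ∈ I j, pstar e :=
          Finset.single_le_sum (fun i _ => hpstar i) he
        have : pstar e ≤ Bmax := le_trans h1 (le_trans hjB (hUB ⟨j, rfl⟩))
        exact min_eq_left this
      have h1 : ∑ e ∈ I j, (pstar e / (1 + ε) - δ) ≤ ∑ e ∈ I j, ptilde e := by
        apply Finset.sum_le_sum
        intro e he
        have := hlb e
        rw [hqeq e he] at this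
        exact this
      have h2 : ∑ e ∈ I j, (pstar e / (1 + ε) - δ)
          = (∑ e ∈ I j, pstar e) / (1 + ε) - ((I j).card : ℝ) * δ := by
        rw [Finset.sum_sub_distrib, ← Finset.sum_div, Finset.sum_const, nsmul_eq_mul]
      have h3 : ((I j).card : ℝ) * δ ≤ (Fintype.card E : ℝ) * δ := by
        apply mul_le_mul_of_nonneg_right ?_ hδpos.le
        exact_mod_cast Finset.card_le_univ (I j)
      rw [h2] at h1
      linarith
    have htotal : S / (1 + ε) - ε * Bmax ≤ ∑ j ∈ Opt, ∑ e ∈ I j, ptilde e := by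
      have h1 : ∑ j ∈ Opt, ((∑ e ∈ I j, pstar e) / (1 + ε) - (Fintype.card E : ℝ) * δ)
          ≤ ∑ j ∈ Opt, ∑ e ∈ I j, ptilde e := Finset.sum_le_sum hper
      have h2 : ∑ j ∈ Opt, ((∑ e ∈ I j, pstar e) / (1 + ε) - (Fintype.card E : ℝ) * δ)
          = S / (1 + ε) - (Opt.card : ℝ) * ((Fintype.card E : ℝ) * δ) := by
        rw [Finset.sum_sub_distrib, ← Finset.sum_div, ← hSdef, Finset.sum_const, nsmul_eq_mul]
      have h3 : (Opt.card : ℝ) * ((Fintype.card E : ℝ) * δ) ≤ ε * Bmax := by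
        have hcard : (Opt.card : ℝ) ≤ (m : ℝ) := by
          exact_mod_cast le_trans (Finset.card_le_univ Opt) (le_of_eq (Finset.card_univ.trans (Fintype.card_fin m)))
        have hNδ : N * δ = ε * Bmax := by rw [hδdef]; field_simp
        have hNeq : N = (Fintype.card E : ℝ) * (m : ℝ) := by
          rw [hNdef]; push_cast; ring
        have hEpos : (0:ℝ) < (Fintype.card E : ℝ) := by exact_mod_cast hn
        calc (Opt.card : ℝ) * ((Fintype.card E : ℝ) * δ)
            ≤ (m : ℝ) * ((Fintype.card E : ℝ) * δ) := by
              apply mul_le_mul_of_nonneg_right hcard (by positivity)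
          _ = N * δ := by rw [hNeq]; ring
          _ = ε * Bmax := hNδ
      linarith
    -- final arithmetic
    have hdiv : S / (1 + ε) * (1 + ε) = S := div_mul_cancel₀ S (ne_of_gt h1ε)
    have hfinal : (1 - 2 * ε) * S ≤ S / (1 + ε) - ε * Bmax := by
      have h1 : ε * Bmax ≤ ε * S := mul_le_mul_of_nonneg_left hSBmax hε.le
      nlinarith [sq_nonneg ε, hS0, hε, hdiv]
    linarith [htotal, hfinal]
end

section
/- Let T = (V, E) be a finite tree with n edges. Then there exists a vertex v ∈ V with the following property: letting s_1, …, s_r be the numbers of vertices of the connected components of the graph obtained from T by deleting v (and all edges incident to v), there is a subset S ⊆ {1, …, r} such that ⌊n/3⌋ ≤ Σ_{i∈S} s_i ≤ ⌈2n/3⌉. -/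
open Finset

namespace TreeSep

variable {V : Type*} [Fintype V] [DecidableEq V]

instance (G : SimpleGraph V) [DecidableRel G.Adj] (s : Set V) [DecidablePred (· ∈ s)] :
    DecidableRel (G.induce s).Adj :=
  fun a b => decidable_of_iff (G.Adj a.1 b.1) Iff.rfl

noncomputable instance (G : SimpleGraph V) : DecidableEq G.ConnectedComponent := by
  classical infer_instance

lemma greedy {α : Type*} [DecidableEq α] (w : α → ℕ) (B m : ℕ) :
    ∀ s : Finset α, (∀ a ∈ s, w a ≤ B) → m ≤ ∑ a ∈ s, w a →
      ∃ t ⊆ s, m ≤ ∑ a ∈ t, w a ∧ ∑ a ∈ t, w a ≤ m + B - 1 := by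
  intro s
  induction s using Finset.induction_on with
  | empty =>
      intro _ hm
      exact ⟨∅, subset_rfl, by simpa using hm, by simp⟩
  | @insert a s' ha ih =>
      intro hB hm
      by_cases h : m ≤ ∑ x ∈ s', w x
      · obtain ⟨t, hts, h1, h2⟩ := ih (fun x hx => hB x (mem_insert_of_mem hx)) h
        exact ⟨t, hts.trans (subset_insert _ _), h1, h2⟩
      · push_neg at h
        refine ⟨insert a s', subset_rfl, hm, ?_⟩
        rw [sum_insert ha] at *
        have := hB a (mem_insert_self a s')
        omega

lemma exists_subset_sum {α : Type*} [DecidableEq α] (w : α → ℕ) (n : ℕ)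
    (s : Finset α) (hsum : ∑ a ∈ s, w a = n) (hmax : ∀ a ∈ s, w a ≤ (n + 1) / 2) :
    ∃ t ⊆ s, n / 3 ≤ ∑ a ∈ t, w a ∧ ∑ a ∈ t, w a ≤ (2 * n + 2) / 3 := by
  by_cases hex : ∃ a ∈ s, n / 3 ≤ w a
  · obtain ⟨a, ha, hle⟩ := hex
    have := hmax a ha
    refine ⟨{a}, singleton_subset_iff.2 ha, by simpa using hle, ?_⟩
    rw [sum_singleton]
    omega
  · push_neg at hex
    by_cases h0 : n / 3 = 0
    · exact ⟨∅, empty_subset _, by simp [h0], by simp⟩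
    · obtain ⟨t, hts, h1, h2⟩ := greedy w (n / 3 - 1) (n / 3) s
        (fun a ha => by have := hex a ha; omega) (by omega)
      exact ⟨t, hts, h1, by omega⟩

lemma reachable_induce {G : SimpleGraph V} {s : Set V} :
    ∀ {a b : V} (p : G.Walk a b), (∀ x ∈ p.support, x ∈ s) → ∀ (ha : a ∈ s) (hb : b ∈ s),
      (G.induce s).Reachable ⟨a, ha⟩ ⟨b, hb⟩
  | _, _, SimpleGraph.Walk.nil, _, ha, hb => SimpleGraph.Reachable.refl _
  | a, b, @SimpleGraph.Walk.cons _ _ _ c _ h p, hs, ha, hb => by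
      have hx : c ∈ s := hs c (by simp)
      have h1 : (G.induce s).Adj ⟨a, ha⟩ ⟨c, hx⟩ := h
      exact h1.reachable.trans (reachable_induce p (fun y hy => hs y (by simp [hy])) hx hb)

lemma exists_walk_of_induce_reachable {G : SimpleGraph V} {s : Set V} {a b : ↥s}
    (h : (G.induce s).Reachable a b) :
    ∃ p : G.Walk a.1 b.1, ∀ x ∈ p.support, x ∈ s := by
  obtain ⟨q⟩ := h
  refine ⟨q.map (SimpleGraph.Embedding.induce s).toHom, ?_⟩
  intro x hx
  have hx : x ∈ (q.map (SimpleGraph.Embedding.induce s).toHom).support := hx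
  rw [SimpleGraph.Walk.support_map, List.mem_map] at hx
  obtain ⟨y, -, rfl⟩ := hx
  exact y.2

lemma sum_fiber_card {W : Type*} [Fintype W] [DecidableEq W]
    (H : SimpleGraph W) [DecidableRel H.Adj] :
    ∑ c : H.ConnectedComponent,
        (univ.filter fun u => H.connectedComponentMk u = c).card = Fintype.card W := by
  rw [← card_univ]
  exact (Finset.card_eq_sum_card_fiberwise (fun x _ => mem_univ (H.connectedComponentMk x))).symm

lemma card_mem_filter {W : Type*} [Fintype W] [DecidableEq W]
    (H : SimpleGraph W) [DecidableRel H.Adj] (t : Finset H.ConnectedComponent) :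
    (univ.filter fun u => H.connectedComponentMk u ∈ t).card
      = ∑ c ∈ t, (univ.filter fun u => H.connectedComponentMk u = c).card := by
  rw [Finset.card_eq_sum_card_fiberwise (f := H.connectedComponentMk) (t := t)
    (s := univ.filter fun u => H.connectedComponentMk u ∈ t)
    (fun x hx => (mem_filter.1 hx).2)]
  refine Finset.sum_congr rfl fun c hc => ?_
  congr 1
  ext x
  simp only [mem_filter, mem_univ, true_and, and_iff_right_iff_imp]
  intro h
  rw [h]
  exact hc

variable (G : SimpleGraph V) [DecidableRel G.Adj]

/-- The vertices of a connected component of `G - v`, as a `Finset` of `V`. -/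
noncomputable def fiber (v : V) (c : (G.induce {u : V | u ≠ v}).ConnectedComponent) : Finset V :=
  (univ.filter fun u : ↥{u : V | u ≠ v} =>
    (G.induce {u : V | u ≠ v}).connectedComponentMk u = c).image Subtype.val

lemma card_fiber (v : V) (c : (G.induce {u : V | u ≠ v}).ConnectedComponent) :
    (fiber G v c).card = (univ.filter fun u : ↥{u : V | u ≠ v} =>
      (G.induce {u : V | u ≠ v}).connectedComponentMk u = c).card :=
  card_image_of_injective _ Subtype.val_injective

lemma mem_fiber {v x : V} {c : (G.induce {u : V | u ≠ v}).ConnectedComponent} :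
    x ∈ fiber G v c ↔
      ∃ h : x ≠ v, (G.induce {u : V | u ≠ v}).connectedComponentMk ⟨x, h⟩ = c := by
  simp only [fiber, mem_image, mem_filter, mem_univ, true_and, Subtype.exists,
    Set.mem_setOf_eq]
  constructor
  · rintro ⟨a, ha, hmk, rfl⟩
    exact ⟨ha, hmk⟩
  · rintro ⟨h, hmk⟩
    exact ⟨x, h, hmk, rfl⟩


lemma exists_centroid (hG : G.IsTree) :
    ∃ v : V, ∀ c : (G.induce {u : V | u ≠ v}).ConnectedComponent,
      2 * (fiber G v c).card ≤ Fintype.card V := by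
  have hne : Nonempty V := hG.isConnected.nonempty
  obtain ⟨v, -, hmin⟩ := Finset.exists_min_image (univ : Finset V)
    (fun v => (univ : Finset ((G.induce {u : V | u ≠ v}).ConnectedComponent)).sup
      (fun c => (fiber G v c).card)) univ_nonempty
  refine ⟨v, fun c => ?_⟩
  by_contra hbig
  push_neg at hbig
  -- find a neighbor w of v inside the big component c
  have hKpos : 0 < (fiber G v c).card := by
    have := Fintype.card_pos (α := V)
    omega
  obtain ⟨u0, hu0⟩ := card_pos.1 hKpos
  rw [mem_fiber] at hu0
  obtain ⟨hu0v, hu0c⟩ := hu0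
  obtain ⟨p0⟩ := hG.isConnected.preconnected v u0
  have hp : p0.bypass.IsPath := p0.bypass_isPath
  obtain ⟨w, hadj, q, hq⟩ := SimpleGraph.Walk.exists_eq_cons_of_ne (Ne.symm hu0v) p0.bypass
  rw [hq, SimpleGraph.Walk.cons_isPath_iff] at hp
  obtain ⟨hqpath, hvq⟩ := hp
  have hwv : w ≠ v := hadj.ne'
  have hwc : (G.induce {u : V | u ≠ v}).connectedComponentMk ⟨w, hwv⟩ = c := by
    rw [← hu0c]
    exact SimpleGraph.ConnectedComponent.sound
      (reachable_induce q (fun x hx => show x ≠ v from fun hxv => hvq (hxv ▸ hx)) hwv hu0v)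
  have claim1 : ∀ (x : V) (hxv : x ≠ v) (hxw : x ≠ w),
      (G.induce {u : V | u ≠ v}).connectedComponentMk ⟨x, hxv⟩ ≠ c →
      (G.induce {u : V | u ≠ w}).Reachable ⟨v, hadj.ne⟩ ⟨x, hxw⟩ := by
    intro x hxv hxw hxc
    obtain ⟨r0⟩ := hG.isConnected.preconnected v x
    have hrpath : r0.bypass.IsPath := r0.bypass_isPath
    by_cases hwr : w ∈ r0.bypass.support
    · exfalso
      apply hxc
      rw [← hwc]
      have hvd : v ∉ (r0.bypass.dropUntil w hwr).support := by
        intro hv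
        have hnodup := hrpath.support_nodup
        rw [← r0.bypass.take_spec hwr, SimpleGraph.Walk.support_append] at hnodup
        have hvtake : v ∈ (r0.bypass.takeUntil w hwr).support :=
          SimpleGraph.Walk.start_mem_support _
        have hvtail : v ∈ ((r0.bypass.dropUntil w hwr).support).tail := by
          rw [SimpleGraph.Walk.support_eq_cons, List.mem_cons] at hv
          rcases hv with hv | hv
          · exact absurd hv.symm hwv
          · exact hv
        exact (List.disjoint_of_nodup_append hnodup) hvtake hvtail
      exact (SimpleGraph.ConnectedComponent.sound
        (reachable_induce (r0.bypass.dropUntil w hwr)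
          (fun y hy => show y ≠ v from fun hyv => hvd (hyv ▸ hy)) hwv hxv)).symm
    · exact reachable_induce r0.bypass (fun y hy => show y ≠ w from fun hyw => hwr (hyw ▸ hy)) hadj.ne hxw
  have claim2 : ∀ (x : V) (hxv : x ≠ v) (hxw : x ≠ w),
      (G.induce {u : V | u ≠ v}).connectedComponentMk ⟨x, hxv⟩ = c →
      ¬ (G.induce {u : V | u ≠ w}).Reachable ⟨v, hadj.ne⟩ ⟨x, hxw⟩ := by
    intro x hxv hxw hxc hreach
    have hxwreach : (G.induce {u : V | u ≠ v}).Reachable ⟨x, hxv⟩ ⟨w, hwv⟩ :=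
      SimpleGraph.ConnectedComponent.eq.1 (hxc.trans hwc.symm)
    obtain ⟨q1, hq1⟩ := exists_walk_of_induce_reachable hxwreach
    obtain ⟨q2, hq2⟩ := exists_walk_of_induce_reachable hreach
    have hP1path : q1.reverse.bypass.IsPath := q1.reverse.bypass_isPath
    have hvP1 : v ∉ q1.reverse.bypass.support := by
      intro hv
      have := q1.reverse.support_bypass_subset hv
      rw [SimpleGraph.Walk.support_reverse, List.mem_reverse] at this
      exact (hq1 v this) rfl
    have hP2path : q2.bypass.IsPath := q2.bypass_isPath
    have hwP2 : w ∉ q2.bypass.support := fun hw' => (hq2 w (q2.support_bypass_subset hw')) rfl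
    have heq : SimpleGraph.Walk.cons hadj q1.reverse.bypass = q2.bypass :=
      (hG.existsUnique_path v x).unique
        ((SimpleGraph.Walk.cons_isPath_iff hadj q1.reverse.bypass).2 ⟨hP1path, hvP1⟩) hP2path
    apply hwP2
    rw [← heq, SimpleGraph.Walk.support_cons]
    exact List.mem_cons_of_mem _ (SimpleGraph.Walk.start_mem_support _)
  -- bound all components of G - w
  set Dv := (G.induce {u : V | u ≠ w}).connectedComponentMk ⟨v, hadj.ne⟩ with hDv
  have hwK : w ∈ fiber G v c := (mem_fiber G).2 ⟨hwv, hwc⟩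
  have hboundv : (fiber G w Dv).card + (fiber G v c).card ≤ Fintype.card V := by
    have hdisj : Disjoint (fiber G w Dv) (fiber G v c) := by
      rw [Finset.disjoint_left]
      intro x hx1 hx2
      rw [mem_fiber] at hx1 hx2
      obtain ⟨hxw, hx1⟩ := hx1
      obtain ⟨hxv, hx2⟩ := hx2
      exact claim2 x hxv hxw hx2
        (SimpleGraph.ConnectedComponent.eq.1 (hx1.trans hDv)).symm
    calc (fiber G w Dv).card + (fiber G v c).card
        = (fiber G w Dv ∪ fiber G v c).card := (card_union_of_disjoint hdisj).symm
      _ ≤ (univ : Finset V).card := card_le_univ _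
      _ = Fintype.card V := card_univ
  have hboundD : ∀ D : (G.induce {u : V | u ≠ w}).ConnectedComponent,
      (fiber G w D).card < (fiber G v c).card := by
    intro D
    by_cases hDD : D = Dv
    · subst hDD
      omega
    · have hsub : fiber G w D ⊆ (fiber G v c).erase w := by
        intro x hx
        rw [mem_fiber] at hx
        obtain ⟨hxw, hxD⟩ := hx
        have hxv : x ≠ v := by
          rintro rfl
          exact hDD (hxD.symm.trans (hDv.symm))
        rw [Finset.mem_erase]
        refine ⟨hxw, (mem_fiber G).2 ⟨hxv, ?_⟩⟩
        by_contra hxc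
        have hreach := claim1 x hxv hxw hxc
        exact hDD (hxD.symm.trans
          ((SimpleGraph.ConnectedComponent.sound hreach.symm).trans hDv.symm))
      calc (fiber G w D).card ≤ ((fiber G v c).erase w).card := card_le_card hsub
        _ < (fiber G v c).card := card_erase_lt_of_mem hwK
  have hFw : ((univ : Finset ((G.induce {u : V | u ≠ w}).ConnectedComponent)).sup
      (fun D => (fiber G w D).card)) < ((univ :
        Finset ((G.induce {u : V | u ≠ v}).ConnectedComponent)).sup
      (fun c' => (fiber G v c').card)) := by
    refine lt_of_lt_of_le ?_ (Finset.le_sup (mem_univ c))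
    rw [Finset.sup_lt_iff hKpos]
    exact fun D _ => hboundD D
  have := hmin w (mem_univ w)
  omega

end TreeSep

/-- Proposition 2, separator theorem for trees.
Every finite tree `T` with `n` edges has a vertex `v` such that some subset `S` of
the connected components of `T - v` covers a total number of vertices between
`⌊n/3⌋` and `⌈2n/3⌉`. -/
theorem tree_separator
    {V : Type*} [Fintype V] [DecidableEq V]
    (G : SimpleGraph V) [DecidableRel G.Adj] (hG : G.IsTree)
    (n : ℕ) (hn : n = G.edgeFinset.card) :
    ∃ v : V,
      ∃ S : Set ((G.induce {u : V | u ≠ v}).ConnectedComponent),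
        n / 3 ≤
            {u : {u : V // u ≠ v} |
              (G.induce {u : V | u ≠ v}).connectedComponentMk u ∈ S}.ncard ∧
        {u : {u : V // u ≠ v} |
              (G.induce {u : V | u ≠ v}).connectedComponentMk u ∈ S}.ncard ≤
            (2 * n + 2) / 3 := by
  obtain ⟨v, hv⟩ := TreeSep.exists_centroid G hG
  have hN : n + 1 = Fintype.card V := by rw [hn]; exact hG.card_edgeFinset
  have hcard : Fintype.card {u : V // u ≠ v} = n := by
    have : Fintype.card ↥{u : V | u ≠ v} = Fintype.card V - 1 := Set.card_ne_eq v
    have h2 : Fintype.card {u : V // u ≠ v} = Fintype.card ↥{u : V | u ≠ v} :=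
      Fintype.card_congr (Equiv.refl _)
    omega
  have hv' : ∀ c : (G.induce {u : V | u ≠ v}).ConnectedComponent,
      2 * (Finset.univ.filter fun u : {u : V // u ≠ v} =>
        (G.induce {u : V | u ≠ v}).connectedComponentMk u = c).card ≤ Fintype.card V := by
    intro c
    have := hv c
    rw [TreeSep.card_fiber] at this
    exact this
  have hsum : ∑ c : (G.induce {u : V | u ≠ v}).ConnectedComponent,
      (Finset.univ.filter fun u : {u : V // u ≠ v} =>
        (G.induce {u : V | u ≠ v}).connectedComponentMk u = c).card = n := by
    have := TreeSep.sum_fiber_card (W := {u : V // u ≠ v})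
      (H := G.induce {u : V | u ≠ v})
    rw [this]
    exact hcard
  obtain ⟨t, -, h1, h2⟩ := TreeSep.exists_subset_sum
    (fun c => (Finset.univ.filter fun u : {u : V // u ≠ v} =>
      (G.induce {u : V | u ≠ v}).connectedComponentMk u = c).card) n Finset.univ hsum
    (fun c _ => by have := hv' c; omega)
  refine ⟨v, ↑t, ?_⟩
  have hset : {u : {u : V // u ≠ v} |
      (G.induce {u : V | u ≠ v}).connectedComponentMk u ∈ (↑t : Set _)}
      = (↑(Finset.univ.filter fun u : {u : V // u ≠ v} =>
          (G.induce {u : V | u ≠ v}).connectedComponentMk u ∈ t) : Set {u : V // u ≠ v}) := by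
    ext u
    simp
  rw [hset, Set.ncard_coe_finset,
    TreeSep.card_mem_filter (W := {u : V // u ≠ v}) (H := G.induce {u : V | u ≠ v}) t]
  exact ⟨h1, h2⟩
end

section
/- Let C be a finite set with at least two elements, let Opt be a finite set, and for each I ∈ Opt let p₁(I), p₂(I) ≥ 0 be reals and α(I), β(I) ∈ C with α(I) ≠ β(I). Let X be a random subset of C obtained by including each element of C independently with probability 1/2. For each I ∈ Opt, set c(I) = α(I) and c̄(I) = β(I) if p₁(I) ≥ p₂(I), and c(I) = β(I), c̄(I) = α(I) otherwise. Then E[ Σ_{I ∈ Opt : c(I) ∈ X and c̄(I) ∉ X} max(p₁(I), p₂(I)) ] ≥ (1/8) · Σ_{I ∈ Opt} (p₁(I) + p₂(I)). -/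
lemma count_subsets {C : Type*} [Fintype C] [DecidableEq C] (a b : C) (hab : a ≠ b) :
    ((Finset.univ : Finset C).powerset.filter (fun X => a ∈ X ∧ b ∉ X)).card
      = 2 ^ (Fintype.card C - 2) := by
  have key : ((Finset.univ : Finset C).powerset.filter (fun X => a ∈ X ∧ b ∉ X)).card
      = (((Finset.univ : Finset C).erase b).erase a).powerset.card := by
    apply Finset.card_bij' (fun X _ => X.erase a) (fun Y _ => insert a Y)
    · intro X hX
      simp only [Finset.mem_filter, Finset.mem_powerset] at hX
      exact Finset.insert_erase hX.2.1
    · intro Y hY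
      simp only [Finset.mem_powerset] at hY
      refine Finset.erase_insert fun ha => ?_
      have := hY ha
      simp [Finset.mem_erase] at this
    · intro X hX
      simp only [Finset.mem_filter, Finset.mem_powerset] at hX
      simp only [Finset.mem_powerset]
      intro x hx
      simp only [Finset.mem_erase] at hx ⊢
      exact ⟨hx.1, fun h => hX.2.2 (h ▸ hx.2), Finset.mem_univ _⟩
    · intro Y hY
      simp only [Finset.mem_powerset] at hY
      simp only [Finset.mem_filter, Finset.mem_powerset]
      refine ⟨Finset.subset_univ _, Finset.mem_insert_self _ _, ?_⟩
      intro hb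
      rcases Finset.mem_insert.1 hb with h | h
      · exact hab h.symm
      · have := hY h
        simp [Finset.mem_erase] at this
  have ha : a ∈ (Finset.univ : Finset C).erase b := by simp [Finset.mem_erase, hab]
  rw [key, Finset.card_powerset, Finset.card_erase_of_mem ha,
    Finset.card_erase_of_mem (Finset.mem_univ b)]
  congr 1

/-- probabilistic core of the randomized-cut step of Theorem 5.
`C` is a finite set with at least two elements; for each `I` in the finite set `Opt`
we have values `p₁ I, p₂ I ≥ 0` and distinct elements `α I ≠ β I` of `C`.  With
`c I` the element corresponding to the larger value and `cbar I` the other one,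
the expectation over a uniformly random subset `X ⊆ C` (each element kept
independently with probability `1/2`) of
`∑_{I ∈ Opt, c I ∈ X, cbar I ∉ X} max (p₁ I) (p₂ I)` is at least
`(1/8) ∑_{I ∈ Opt} (p₁ I + p₂ I)`.  The expectation is written as the average
over all `2^|C|` subsets `X` of `C`. -/
theorem randomized_cut_expectation
    {ι C : Type*} [Fintype C] [DecidableEq C] (hC : 2 ≤ Fintype.card C)
    (Opt : Finset ι) (p₁ p₂ : ι → ℝ)
    (hp₁ : ∀ I ∈ Opt, 0 ≤ p₁ I) (hp₂ : ∀ I ∈ Opt, 0 ≤ p₂ I)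
    (α β : ι → C) (hαβ : ∀ I ∈ Opt, α I ≠ β I)
    (c cbar : ι → C)
    (hc : ∀ I, c I = if p₂ I ≤ p₁ I then α I else β I)
    (hcbar : ∀ I, cbar I = if p₂ I ≤ p₁ I then β I else α I) :
    (1 / 8 : ℝ) * ∑ I ∈ Opt, (p₁ I + p₂ I) ≤
      (1 / 2 : ℝ) ^ (Fintype.card C) *
        ∑ X ∈ (Finset.univ : Finset C).powerset,
          ∑ I ∈ Opt.filter (fun I => c I ∈ X ∧ cbar I ∉ X),
            max (p₁ I) (p₂ I) := by
  have hne : ∀ I ∈ Opt, c I ≠ cbar I := by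
    intro I hI
    rw [hc, hcbar]
    split
    · exact hαβ I hI
    · exact (hαβ I hI).symm
  have hswap :
      ∑ X ∈ (Finset.univ : Finset C).powerset,
          ∑ I ∈ Opt.filter (fun I => c I ∈ X ∧ cbar I ∉ X), max (p₁ I) (p₂ I)
        = ∑ I ∈ Opt, (2 ^ (Fintype.card C - 2) : ℝ) * max (p₁ I) (p₂ I) := by
    have h1 : ∀ X : Finset C,
        ∑ I ∈ Opt.filter (fun I => c I ∈ X ∧ cbar I ∉ X), max (p₁ I) (p₂ I)
          = ∑ I ∈ Opt, if c I ∈ X ∧ cbar I ∉ X then max (p₁ I) (p₂ I) else 0 := by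
      intro X; rw [Finset.sum_filter]
    simp_rw [h1]
    rw [Finset.sum_comm]
    refine Finset.sum_congr rfl fun I hI => ?_
    rw [← Finset.sum_filter, Finset.sum_const, nsmul_eq_mul,
      count_subsets (c I) (cbar I) (hne I hI)]
    push_cast
    ring
  rw [hswap, Finset.mul_sum]
  rw [Finset.mul_sum]
  refine Finset.sum_le_sum fun I hI => ?_
  have hmax : p₁ I + p₂ I ≤ 2 * max (p₁ I) (p₂ I) := by
    rcases le_total (p₁ I) (p₂ I) with h | h <;> simp [max_eq_right, max_eq_left, h] <;> linarith
  have hpow : (1 / 2 : ℝ) ^ Fintype.card C * (2 ^ (Fintype.card C - 2) : ℝ) = 1 / 4 := by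
    rw [div_pow, one_pow]
    rw [show Fintype.card C = (Fintype.card C - 2) + 2 by omega]
    rw [pow_add]
    field_simp
    norm_num
  calc (1 / 8 : ℝ) * (p₁ I + p₂ I) ≤ (1 / 8 : ℝ) * (2 * max (p₁ I) (p₂ I)) := by
        apply mul_le_mul_of_nonneg_left hmax; norm_num
    _ = (1 / 4 : ℝ) * max (p₁ I) (p₂ I) := by ring
    _ = (1 / 2 : ℝ) ^ Fintype.card C * ((2 ^ (Fintype.card C - 2) : ℝ) * max (p₁ I) (p₂ I)) := by
        rw [← mul_assoc, hpow]
end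

section
/- Let T be a finite tree rooted at a vertex r, with n edges, and let P₁, …, P_m be paths in T (each connecting two vertices of T). Suppose that for every vertex v ≠ r of T, either some P_j has an endpoint at v, or some P_j contains two distinct children of v. Then n ≤ 3m. -/
open SimpleGraph Walk

section Aux

variable {V : Type*} [DecidableEq V] {G : SimpleGraph V}

private lemma tree_path_length (hG : G.IsTree) {u v : V} {p : G.Walk u v}
    (hp : p.IsPath) : p.length = G.dist u v := by
  obtain ⟨q, hq, hql⟩ := hG.isConnected.exists_path_of_dist u v
  have h := (hG.existsUnique_path u v).unique hp hq
  rw [h, hql]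

private lemma tree_dist_split (hG : G.IsTree) {u v x : V} {p : G.Walk u v}
    (hp : p.IsPath) (hx : x ∈ p.support) :
    G.dist u v = G.dist u x + G.dist x v := by
  rw [← tree_path_length hG hp, ← tree_path_length hG (hp.takeUntil hx),
    ← tree_path_length hG (hp.dropUntil hx), ← Walk.length_append, Walk.take_spec]

/-- `w` is a child of `v` with respect to root `r`. -/
private def IsChild (G : SimpleGraph V) (r v w : V) : Prop :=
  G.Adj v w ∧ G.dist w r = G.dist v r + 1

private lemma adj_dist_dichotomy (hG : G.IsTree) (r : V) {a b : V} (h : G.Adj a b) :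
    G.dist b r = G.dist a r + 1 ∨ G.dist a r = G.dist b r + 1 := by
  obtain ⟨p, hp, hpl⟩ := hG.isConnected.exists_path_of_dist a r
  by_cases hb : b ∈ p.support
  · right
    have h1 := tree_dist_split hG hp hb
    have h2 : G.dist a b = 1 := SimpleGraph.dist_eq_one_iff_adj.mpr h
    omega
  · left
    have hW : (Walk.cons h.symm p).IsPath := hp.cons hb
    have h1 := tree_path_length hG hW
    rw [Walk.length_cons, hpl] at h1
    omega

private lemma parent_unique (hG : G.IsTree) (r : V) {v c c' : V}
    (h1 : G.Adj v c) (hd1 : G.dist c r = G.dist v r + 1)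
    (h2 : G.Adj c' c) (hd2 : G.dist c' r = G.dist v r) : v = c' := by
  obtain ⟨pv, hpv, hlv⟩ := hG.isConnected.exists_path_of_dist v r
  obtain ⟨pc', hpc', hlc'⟩ := hG.isConnected.exists_path_of_dist c' r
  have hcv : c ∉ pv.support := by
    intro hm
    have hs := tree_dist_split hG hpv hm
    have he : G.dist v c = 1 := SimpleGraph.dist_eq_one_iff_adj.mpr h1
    omega
  have hcc' : c ∉ pc'.support := by
    intro hm
    have hs := tree_dist_split hG hpc' hm
    have he : G.dist c' c = 1 := SimpleGraph.dist_eq_one_iff_adj.mpr h2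
    omega
  have hA : (Walk.cons h1.symm pv).IsPath := hpv.cons hcv
  have hB : (Walk.cons h2.symm pc').IsPath := hpc'.cons hcc'
  have hAB := (hG.existsUnique_path c r).unique hA hB
  have hvA : v ∈ (Walk.cons h1.symm pv).support := by
    rw [Walk.support_cons]
    exact List.mem_cons_of_mem _ pv.start_mem_support
  rw [hAB, Walk.support_cons, List.mem_cons] at hvA
  rcases hvA with rfl | hvp
  · omega
  · have hs := tree_dist_split hG hpc' hvp
    have hz : G.dist c' v = 0 := by omega
    exact ((hG.isConnected.dist_eq_zero_iff).mp hz).symm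

private lemma descend (hG : G.IsTree) (r : V) {x : V} :
    ∀ {c : V} (Q : G.Walk c x), Q.IsPath → ∀ v : V, G.Adj v c →
      G.dist c r = G.dist v r + 1 → v ∉ Q.support →
      G.dist x r = G.dist v r + 1 + Q.length := by
  intro c Q
  induction Q with
  | nil =>
    intro _ v _ hd _
    simpa using hd
  | @cons c c' _ h Q ih =>
    intro hQ v hadj hd hv
    rw [Walk.cons_isPath_iff] at hQ
    rcases adj_dist_dichotomy hG r h with hup | hdown
    · have hrec := ih hQ.1 c h hup hQ.2
      rw [Walk.length_cons]
      omega
    · exfalso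
      have hvc : v = c' := parent_unique hG r hadj hd h.symm (by omega)
      apply hv
      rw [Walk.support_cons, hvc]
      exact List.mem_cons_of_mem _ Q.start_mem_support

private lemma child_eq_snd (hG : G.IsTree) (r : V) {v b c x : V} {h : G.Adj v b}
    {Q : G.Walk b x} (hp : (Walk.cons h Q).IsPath) (hc : G.Adj v c)
    (hcm : c ∈ Q.support) : b = c := by
  rw [Walk.cons_isPath_iff] at hp
  have hR : (Q.takeUntil c hcm).IsPath := hp.1.takeUntil hcm
  have hvR : v ∉ (Q.takeUntil c hcm).support :=
    fun hh => hp.2 (Q.support_takeUntil_subset hcm hh)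
  have hW : (Walk.cons h (Q.takeUntil c hcm)).IsPath := hR.cons hvR
  have hl := tree_path_length hG hW
  rw [Walk.length_cons, SimpleGraph.dist_eq_one_iff_adj.mpr hc] at hl
  exact Walk.eq_of_length_eq_zero (p := Q.takeUntil c hcm) (by omega)

private lemma children_unique (hG : G.IsTree) (r : V) {v x c₁ c₂ : V} {p : G.Walk v x}
    (hp : p.IsPath) (h1 : IsChild G r v c₁) (h2 : IsChild G r v c₂)
    (m1 : c₁ ∈ p.support) (m2 : c₂ ∈ p.support) : c₁ = c₂ := by
  cases p with
  | nil =>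
    rw [Walk.mem_support_nil_iff] at m1
    subst m1
    have := h1.2
    omega
  | @cons _ b _ h Q =>
    have hb1 : c₁ ≠ v := fun e => by rw [e] at h1; have := h1.2; omega
    have hb2 : c₂ ≠ v := fun e => by rw [e] at h2; have := h2.2; omega
    rw [Walk.support_cons, List.mem_cons] at m1 m2
    have m1' : c₁ ∈ Q.support := m1.resolve_left hb1
    have m2' : c₂ ∈ Q.support := m2.resolve_left hb2
    rw [← child_eq_snd hG r hp h1.1 m1', ← child_eq_snd hG r hp h2.1 m2']

private lemma dist_lt_of_child_side (hG : G.IsTree) (r : V) {v x c u : V}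
    {p : G.Walk v x} (hp : p.IsPath) (hc : IsChild G r v c) (hcm : c ∈ p.support)
    (hu : u ∈ p.support) (hune : u ≠ v) : G.dist v r < G.dist u r := by
  cases p with
  | nil =>
    rw [Walk.mem_support_nil_iff] at hu
    exact absurd hu hune
  | @cons _ b _ h Q =>
    have hcv : c ≠ v := fun e => by rw [e] at hc; have := hc.2; omega
    rw [Walk.support_cons, List.mem_cons] at hcm hu
    have hcQ : c ∈ Q.support := hcm.resolve_left hcv
    have hbc : b = c := child_eq_snd hG r hp hc.1 hcQ
    subst hbc
    have huQ : u ∈ Q.support := hu.resolve_left hune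
    rw [Walk.cons_isPath_iff] at hp
    have hdes := descend hG r (Q.takeUntil u huQ) (hp.1.takeUntil huQ) v hc.1 hc.2
      (fun hh => hp.2 (Q.support_takeUntil_subset huQ hh))
    omega

private lemma apex_mem (hG : G.IsTree) (r : V) {v w₁ w₂ a b : V} {p : G.Walk a b}
    (hp : p.IsPath) (hne : w₁ ≠ w₂) (h1 : IsChild G r v w₁) (h2 : IsChild G r v w₂)
    (m1 : w₁ ∈ p.support) (m2 : w₂ ∈ p.support) : v ∈ p.support := by
  have hv1 : w₁ ≠ v := fun e => by rw [e] at h1; have := h1.2; omega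
  have hv2 : w₂ ≠ v := fun e => by rw [e] at h2; have := h2.2; omega
  have hW : (Walk.cons h1.1.symm (Walk.cons h2.1 Walk.nil)).IsPath := by
    rw [Walk.cons_isPath_iff, Walk.cons_isPath_iff]
    refine ⟨⟨Walk.IsPath.nil, ?_⟩, ?_⟩
    · simpa using Ne.symm hv2
    · simp [hne, hv1]
  obtain ⟨Q, hQ, hQsub⟩ : ∃ Q : G.Walk w₁ w₂, Q.IsPath ∧ ∀ y ∈ Q.support, y ∈ p.support := by
    by_cases hmem : w₁ ∈ (p.takeUntil w₂ m2).support
    · exact ⟨(p.takeUntil w₂ m2).dropUntil w₁ hmem, (hp.takeUntil m2).dropUntil hmem,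
        fun y hy => p.support_takeUntil_subset m2
          ((p.takeUntil w₂ m2).support_dropUntil_subset hmem hy)⟩
    · have hmem' : w₁ ∈ (p.dropUntil w₂ m2).support := by
        have hsp := p.take_spec m2
        rw [← hsp, Walk.mem_support_append_iff] at m1
        exact m1.resolve_left hmem
      refine ⟨((p.dropUntil w₂ m2).takeUntil w₁ hmem').reverse,
        ((hp.dropUntil m2).takeUntil hmem').reverse, ?_⟩
      intro y hy
      rw [Walk.support_reverse, List.mem_reverse] at hy
      exact p.support_dropUntil_subset m2
        ((p.dropUntil w₂ m2).support_takeUntil_subset hmem' hy)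
  have huniq := (hG.existsUnique_path w₁ w₂).unique hQ hW
  apply hQsub
  rw [huniq]
  simp

private lemma apex_min (hG : G.IsTree) (r : V) {a b v u : V} {p : G.Walk a b}
    (hp : p.IsPath) {w₁ w₂ : V} (hne : w₁ ≠ w₂)
    (h1 : IsChild G r v w₁) (h2 : IsChild G r v w₂)
    (m1 : w₁ ∈ p.support) (m2 : w₂ ∈ p.support)
    (hu : u ∈ p.support) (hune : u ≠ v) : G.dist v r < G.dist u r := by
  have hv := apex_mem hG r hp hne h1 h2 m1 m2
  have hsplit : ∀ y, y ∈ p.support →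
      y ∈ (p.takeUntil v hv).support ∨ y ∈ (p.dropUntil v hv).support := by
    intro y hy
    rw [← p.take_spec hv, Walk.mem_support_append_iff] at hy
    exact hy
  have hrev : (p.takeUntil v hv).reverse.IsPath := (hp.takeUntil hv).reverse
  have hmemrev : ∀ y, y ∈ (p.takeUntil v hv).support →
      y ∈ (p.takeUntil v hv).reverse.support := by
    intro y hy
    rw [Walk.support_reverse]
    exact List.mem_reverse.mpr hy
  rcases hsplit u hu with hu1 | hu2
  · by_cases hw1 : w₁ ∈ (p.takeUntil v hv).support
    · exact dist_lt_of_child_side hG r hrev h1 (hmemrev _ hw1) (hmemrev _ hu1) hune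
    · by_cases hw2 : w₂ ∈ (p.takeUntil v hv).support
      · exact dist_lt_of_child_side hG r hrev h2 (hmemrev _ hw2) (hmemrev _ hu1) hune
      · have hm1' := (hsplit w₁ m1).resolve_left hw1
        have hm2' := (hsplit w₂ m2).resolve_left hw2
        exact absurd (children_unique hG r (hp.dropUntil hv) h1 h2 hm1' hm2') hne
  · by_cases hw1 : w₁ ∈ (p.dropUntil v hv).support
    · exact dist_lt_of_child_side hG r (hp.dropUntil hv) h1 hw1 hu2 hune
    · by_cases hw2 : w₂ ∈ (p.dropUntil v hv).support
      · exact dist_lt_of_child_side hG r (hp.dropUntil hv) h2 hw2 hu2 hune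
      · have hm1' := hmemrev _ ((hsplit w₁ m1).resolve_right hw1)
        have hm2' := hmemrev _ ((hsplit w₂ m2).resolve_right hw2)
        exact absurd (children_unique hG r hrev h1 h2 hm1' hm2') hne

private def Apex (G : SimpleGraph V) (r : V) {a b : V} (p : G.Walk a b) (v : V) : Prop :=
  ∃ w₁ w₂ : V, w₁ ≠ w₂ ∧ IsChild G r v w₁ ∧ IsChild G r v w₂ ∧
    w₁ ∈ p.support ∧ w₂ ∈ p.support

private lemma apex_unique (hG : G.IsTree) (r : V) {a b : V} {p : G.Walk a b}
    (hp : p.IsPath) {v v' : V} (hv : Apex G r p v) (hv' : Apex G r p v') : v = v' := by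
  by_contra hvv
  obtain ⟨w₁, w₂, hne, h1, h2, m1, m2⟩ := hv
  obtain ⟨w₁', w₂', hne', h1', h2', m1', m2'⟩ := hv'
  have hA := apex_min hG r hp hne h1 h2 m1 m2
    (apex_mem hG r hp hne' h1' h2' m1' m2') (Ne.symm hvv)
  have hB := apex_min hG r hp hne' h1' h2' m1' m2'
    (apex_mem hG r hp hne h1 h2 m1 m2) hvv
  omega

end Aux

/-- the structural claim justifying `n ≤ 3m`.
Let `T` be a finite tree with `n` edges rooted at `r`, and let `P 1, …, P m` be paths
in `T`.  A vertex `w` is a child of `v` if `w` is adjacent to `v` and `v` lies on the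
path from `w` to `r`.  If every vertex `v ≠ r` is either an endpoint of some path
`P j`, or some path `P j` contains two distinct children of `v`, then `n ≤ 3m`. -/
theorem tree_edges_le_three_mul_paths
    {V : Type*} [Fintype V] [DecidableEq V]
    (G : SimpleGraph V) [DecidableRel G.Adj] (hG : G.IsTree) (r : V)
    (m : ℕ) (s t : Fin m → V)
    (P : ∀ j : Fin m, G.Walk (s j) (t j)) (hP : ∀ j, (P j).IsPath)
    (hcond : ∀ v : V, v ≠ r →
      (∃ j : Fin m, s j = v ∨ t j = v) ∨
      (∃ (j : Fin m) (w₁ w₂ : V), w₁ ≠ w₂ ∧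
        (G.Adj v w₁ ∧ ∃ q : G.Walk w₁ r, q.IsPath ∧ v ∈ q.support) ∧
        (G.Adj v w₂ ∧ ∃ q : G.Walk w₂ r, q.IsPath ∧ v ∈ q.support) ∧
        w₁ ∈ (P j).support ∧ w₂ ∈ (P j).support)) :
    G.edgeFinset.card ≤ 3 * m := by
  classical
  have hcardV := hG.card_edgeFinset
  rcases Nat.eq_zero_or_pos m with rfl | hm
  · have hV : ∀ v : V, v = r := by
      intro v
      by_contra hvr
      rcases hcond v hvr with ⟨j, _⟩ | ⟨j, _⟩ <;> exact j.elim0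
    have h1 : Fintype.card V ≤ 1 :=
      Fintype.card_le_one_iff.mpr fun a b => (hV a).trans (hV b).symm
    omega
  · have htri : ∀ v : V, v ≠ r →
        (∃ j, s j = v) ∨ (∃ j, t j = v) ∨ (∃ j, Apex G r (P j) v) := by
      intro v hv
      rcases hcond v hv with ⟨j, hj | hj⟩ |
        ⟨j, w₁, w₂, hne, ⟨ha1, q1, hq1, hv1⟩, ⟨ha2, q2, hq2, hv2⟩, hm1, hm2⟩
      · exact Or.inl ⟨j, hj⟩
      · exact Or.inr (Or.inl ⟨j, hj⟩)
      · refine Or.inr (Or.inr ⟨j, w₁, w₂, hne, ⟨ha1, ?_⟩, ⟨ha2, ?_⟩, hm1, hm2⟩)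
        · have hs := tree_dist_split hG hq1 hv1
          have he : G.dist w₁ v = 1 := SimpleGraph.dist_eq_one_iff_adj.mpr ha1.symm
          omega
        · have hs := tree_dist_split hG hq2 hv2
          have he : G.dist w₂ v = 1 := SimpleGraph.dist_eq_one_iff_adj.mpr ha2.symm
          omega
    let j0 : Fin m := ⟨0, hm⟩
    let f : V → Fin m × Fin 3 := fun v =>
      if h1 : ∃ j, s j = v then (h1.choose, 0)
      else if h2 : ∃ j, t j = v then (h2.choose, 1)
      else if h3 : ∃ j, Apex G r (P j) v then (h3.choose, 2)
      else (j0, 0)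
    have hkey : ∀ v : V, v ≠ r →
        (∃ j : Fin m, s j = v ∧ f v = (j, 0)) ∨
        (∃ j : Fin m, t j = v ∧ f v = (j, 1)) ∨
        (∃ j : Fin m, Apex G r (P j) v ∧ f v = (j, 2)) := by
      intro v hv
      by_cases h1 : ∃ j, s j = v
      · exact Or.inl ⟨h1.choose, h1.choose_spec, by simp only [f]; rw [dif_pos h1]⟩
      by_cases h2 : ∃ j, t j = v
      · exact Or.inr (Or.inl ⟨h2.choose, h2.choose_spec,
          by simp only [f]; rw [dif_neg h1, dif_pos h2]⟩)
      have h3 : ∃ j, Apex G r (P j) v := by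
        rcases htri v hv with h | h | h
        exacts [absurd h h1, absurd h h2, h]
      exact Or.inr (Or.inr ⟨h3.choose, h3.choose_spec,
        by simp only [f]; rw [dif_neg h1, dif_neg h2, dif_pos h3]⟩)
    have hinj : Set.InjOn f (Finset.univ.erase r) := by
      intro v₁ hv₁ v₂ hv₂ hf
      rw [Finset.coe_erase, Set.mem_diff] at hv₁ hv₂
      have hr₁ : v₁ ≠ r := by simpa using hv₁.2
      have hr₂ : v₂ ≠ r := by simpa using hv₂.2
      rcases hkey v₁ hr₁ with ⟨j, hj, hfj⟩ | ⟨j, hj, hfj⟩ | ⟨j, hj, hfj⟩ <;>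
        rcases hkey v₂ hr₂ with ⟨j', hj', hfj'⟩ | ⟨j', hj', hfj'⟩ | ⟨j', hj', hfj'⟩ <;>
        rw [hfj, hfj', Prod.mk.injEq] at hf <;>
        first
          | exact absurd hf.2 (by decide)
          | (rw [← hj, ← hj', hf.1])
          | exact apex_unique hG r (hP j) hj (by rw [hf.1]; exact hj')
    have hle := Finset.card_le_card_of_injOn f (fun a _ => Finset.mem_univ (f a)) hinj
    rw [Finset.card_erase_of_mem (Finset.mem_univ r), Finset.card_univ,
      Finset.card_univ] at hle
    have h2 : Fintype.card (Fin m × Fin 3) = 3 * m := by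
      simp [Fintype.card_prod]
      ring
    have h3 : 1 ≤ Fintype.card V := @Fintype.card_pos _ _ hG.isConnected.nonempty
    omega
end

section
/- For every pricing p of the basic gadget, the profit is at most 18; moreover, the profit equals 18 if and only if (p(e₁), p(e₂), p(e₃), p(e₄)) = (1, 2, 2, 1) or (p(e₁), p(e₂), p(e₃), p(e₄)) = (2, 1, 1, 2). -/
/-- A single-minded customer with bundle price `x` and budget `B` pays `x` if
`x ≤ B` and `0` otherwise. -/
noncomputable def pay (x B : ℝ) : ℝ := if x ≤ B then x else 0

/-- The profit of a pricing `p` of the four items `e₁, e₂, e₃, e₄` of the basic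
gadget: customers `a₁,…,a₄` with bundles `{e₁},…,{e₄}` and budgets `1,2,2,1`;
customers `b₁,…,b₄` with the same bundles and budgets `2,1,1,2`; customers `c₁`
with bundle `{e₁,e₂}` and `c₂` with bundle `{e₃,e₄}`, both of budget `3`;
customers `d₁, d₂` with bundle `{e₂,e₃}` and budgets `4` and `2`. -/
noncomputable def basicProfit (p : Fin 4 → ℝ) : ℝ :=
  pay (p 0) 1 + pay (p 1) 2 + pay (p 2) 2 + pay (p 3) 1 +
  pay (p 0) 2 + pay (p 1) 1 + pay (p 2) 1 + pay (p 3) 2 +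
  pay (p 0 + p 1) 3 + pay (p 2 + p 3) 3 +
  pay (p 1 + p 2) 4 + pay (p 1 + p 2) 2

/-- An item with budgets `1` and `2` yields at most `2`, with equality iff its
price is `1` or `2`. -/
lemma payA (x : ℝ) (hx : 0 ≤ x) :
    pay x 1 + pay x 2 ≤ 2 ∧ (pay x 1 + pay x 2 = 2 ↔ x = 1 ∨ x = 2) := by
  unfold pay
  split_ifs <;> refine ⟨by linarith, fun h => ?_, fun h => ?_⟩ <;>
    first
      | (exact Or.inl (by linarith))
      | (exact Or.inr (by linarith))
      | (exfalso; linarith)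
      | (rcases h with h | h <;> linarith)

/-- A budget-`3` customer pays at most `3`, with equality iff her bundle costs `3`. -/
lemma payC (s : ℝ) : pay s 3 ≤ 3 ∧ (pay s 3 = 3 ↔ s = 3) := by
  unfold pay
  split_ifs <;> refine ⟨by linarith, fun h => ?_, fun h => ?_⟩ <;> linarith

/-- The middle block (customers `a₂,a₃,b₂,b₃,d₁,d₂`) yields at most `8`, with
equality iff `(p e₂, p e₃)` is `(1,1)` or `(2,2)`. -/
lemma payG (y z : ℝ) (hy : 0 ≤ y) (hz : 0 ≤ z) :
    pay y 2 + pay y 1 + pay z 2 + pay z 1 + pay (y + z) 4 + pay (y + z) 2 ≤ 8 ∧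
      (pay y 2 + pay y 1 + pay z 2 + pay z 1 + pay (y + z) 4 + pay (y + z) 2 = 8 ↔
        (y = 1 ∧ z = 1) ∨ (y = 2 ∧ z = 2)) := by
  unfold pay
  split_ifs <;> refine ⟨by linarith, fun h => ?_, fun h => ?_⟩ <;>
    first
      | (exact Or.inl ⟨by linarith, by linarith⟩)
      | (exact Or.inr ⟨by linarith, by linarith⟩)
      | (exfalso; linarith)
      | (rcases h with ⟨h1, h2⟩ | ⟨h1, h2⟩ <;> linarith)

/-- Lemma basegadget.
For every nonnegative pricing of the basic gadget the profit is at most `18`,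
with equality iff the prices are `(1,2,2,1)` or `(2,1,1,2)`. -/
theorem basic_gadget_profit (p : Fin 4 → ℝ) (hp : ∀ i, 0 ≤ p i) :
    basicProfit p ≤ 18 ∧
      (basicProfit p = 18 ↔
        (p 0 = 1 ∧ p 1 = 2 ∧ p 2 = 2 ∧ p 3 = 1) ∨
        (p 0 = 2 ∧ p 1 = 1 ∧ p 2 = 1 ∧ p 3 = 2)) := by
  have key : basicProfit p =
      (pay (p 0) 1 + pay (p 0) 2) + (pay (p 3) 1 + pay (p 3) 2) +
      (pay (p 1) 2 + pay (p 1) 1 + pay (p 2) 2 + pay (p 2) 1 +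
        pay (p 1 + p 2) 4 + pay (p 1 + p 2) 2) +
      pay (p 0 + p 1) 3 + pay (p 2 + p 3) 3 := by
    unfold basicProfit; ring
  obtain ⟨hA, hAe⟩ := payA (p 0) (hp 0)
  obtain ⟨hW, hWe⟩ := payA (p 3) (hp 3)
  obtain ⟨hG, hGe⟩ := payG (p 1) (p 2) (hp 1) (hp 2)
  obtain ⟨hC1, hC1e⟩ := payC (p 0 + p 1)
  obtain ⟨hC2, hC2e⟩ := payC (p 2 + p 3)
  rw [key]
  refine ⟨by linarith, fun h => ?_, fun h => ?_⟩
  · have eG : pay (p 1) 2 + pay (p 1) 1 + pay (p 2) 2 + pay (p 2) 1 +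
        pay (p 1 + p 2) 4 + pay (p 1 + p 2) 2 = 8 := by linarith
    have hc1 : p 0 + p 1 = 3 := hC1e.mp (by linarith)
    have hc2 : p 2 + p 3 = 3 := hC2e.mp (by linarith)
    rcases hGe.mp eG with ⟨hy, hz⟩ | ⟨hy, hz⟩
    · exact Or.inr ⟨by linarith, hy, hz, by linarith⟩
    · exact Or.inl ⟨by linarith, hy, hz, by linarith⟩
  · rcases h with ⟨e1, e2, e3, e4⟩ | ⟨e1, e2, e3, e4⟩ <;>
      rw [e1, e2, e3, e4] <;> norm_num [pay]
end

section
/- Fix integers m, n ≥ 1, a truth assignment t : {1, …, n} → {TRUE, FALSE}, and indices 1 ≤ i, j ≤ n, and let p be the consistent pricing induced by t. Then: the total price of the bundle {e_{4i−3}, e_{4i−4}, …, e₁, h, f₁, …, f_{4j−3}} is at most mn² + 6(i+j−2) + 3 if and only if t(i) = TRUE or t(j) = TRUE; the total price of {e_{4i−1}, e_{4i−2}, …, e₁, h, f₁, …, f_{4j−3}} is at most mn² + 6(i+j−2) + 6 if and only if t(i) = FALSE or t(j) = TRUE; the total price of {e_{4i−3}, …, e₁, h, f₁, …, f_{4j−1}}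 is at most mn² + 6(i+j−2) + 6 if and only if t(i) = TRUE or t(j) = FALSE; and the total price of {e_{4i−1}, …, e₁, h, f₁, …, f_{4j−1}} is at most mn² + 6(i+j−2) + 9 if and only if t(i) = FALSE or t(j) = FALSE. -/
lemma quad_sum (n : ℕ) (t : ℕ → Bool) (p : ℕ → ℝ)
    (hp : ∀ k, 1 ≤ k → k ≤ n →
      if t k then
        p (4 * k - 3) = 1 ∧ p (4 * k - 2) = 2 ∧ p (4 * k - 1) = 2 ∧ p (4 * k) = 1
      else
        p (4 * k - 3) = 2 ∧ p (4 * k - 2) = 1 ∧ p (4 * k - 1) = 1 ∧ p (4 * k) = 2) :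
    ∀ k, k ≤ n → ∑ l ∈ Finset.Icc 1 (4 * k), p l = 6 * k := by
  intro k
  induction k with
  | zero => simp
  | succ k ih =>
    intro hk
    have hks : ∑ l ∈ Finset.Icc 1 (4*k), p l = 6*k := ih (by omega)
    have hq := hp (k+1) (by omega) hk
    have e1 : 4*(k+1) - 3 = 4*k+1 := by omega
    have e2 : 4*(k+1) - 2 = 4*k+2 := by omega
    have e3 : 4*(k+1) - 1 = 4*k+3 := by omega
    have e4 : 4*(k+1) = 4*k+4 := by omega
    rw [e1, e2, e3, e4] at hq
    have expand : ∑ l ∈ Finset.Icc 1 (4*(k+1)), p l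
        = ∑ l ∈ Finset.Icc 1 (4*k), p l + p (4*k+1) + p (4*k+2) + p (4*k+3) + p (4*k+4) := by
      rw [show 4*(k+1) = (4*k+3)+1 from by ring,
          Finset.sum_Icc_succ_top (by omega),
          show 4*k+3 = (4*k+2)+1 from by ring,
          Finset.sum_Icc_succ_top (by omega),
          show 4*k+2 = (4*k+1)+1 from by ring,
          Finset.sum_Icc_succ_top (by omega),
          show 4*k+1 = (4*k)+1 from by ring,
          Finset.sum_Icc_succ_top (by omega)]
    rw [expand, hks]
    by_cases h : t (k+1)
    · rw [if_pos h] at hq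
      obtain ⟨a, b, c, d⟩ := hq
      rw [a, b, c, d]; push_cast; ring
    · rw [if_neg h] at hq
      obtain ⟨a, b, c, d⟩ := hq
      rw [a, b, c, d]; push_cast; ring

lemma partial_sum3 (n : ℕ) (t : ℕ → Bool) (p : ℕ → ℝ)
    (hp : ∀ k, 1 ≤ k → k ≤ n →
      if t k then
        p (4 * k - 3) = 1 ∧ p (4 * k - 2) = 2 ∧ p (4 * k - 1) = 2 ∧ p (4 * k) = 1
      else
        p (4 * k - 3) = 2 ∧ p (4 * k - 2) = 1 ∧ p (4 * k - 1) = 1 ∧ p (4 * k) = 2) :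
    ∀ k, 1 ≤ k → k ≤ n →
      ∑ l ∈ Finset.Icc 1 (4 * k - 3), p l
        = 6 * ((k : ℝ) - 1) + (if t k then 1 else 2) := by
  intro k hk1 hk2
  have hq := hp k hk1 hk2
  have hbase := quad_sum n t p hp (k-1) (by omega)
  rw [show 4*k - 3 = (4*(k-1))+1 from by omega, Finset.sum_Icc_succ_top (by omega), hbase,
      show 4*(k-1)+1 = 4*k-3 from by omega]
  have hc : ((k-1 : ℕ) : ℝ) = (k : ℝ) - 1 := by
    push_cast [hk1]; ring
  rw [hc]
  by_cases h : t k
  · rw [if_pos h] at hq ⊢; rw [hq.1]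
  · rw [if_neg h] at hq ⊢; rw [hq.1]

lemma partial_sum1 (n : ℕ) (t : ℕ → Bool) (p : ℕ → ℝ)
    (hp : ∀ k, 1 ≤ k → k ≤ n →
      if t k then
        p (4 * k - 3) = 1 ∧ p (4 * k - 2) = 2 ∧ p (4 * k - 1) = 2 ∧ p (4 * k) = 1
      else
        p (4 * k - 3) = 2 ∧ p (4 * k - 2) = 1 ∧ p (4 * k - 1) = 1 ∧ p (4 * k) = 2) :
    ∀ k, 1 ≤ k → k ≤ n →
      ∑ l ∈ Finset.Icc 1 (4 * k - 1), p l
        = 6 * ((k : ℝ) - 1) + (if t k then 5 else 4) := by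
  intro k hk1 hk2
  have hq := hp k hk1 hk2
  have hbase := quad_sum n t p hp (k-1) (by omega)
  rw [show 4*k - 1 = (4*k-2)+1 from by omega, Finset.sum_Icc_succ_top (by omega),
      show 4*k - 2 = (4*k-3)+1 from by omega, Finset.sum_Icc_succ_top (by omega),
      show 4*k - 3 = (4*(k-1))+1 from by omega, Finset.sum_Icc_succ_top (by omega), hbase,
      show 4*(k-1)+1 = 4*k-3 from by omega,
      show 4*k-3+1 = 4*k-2 from by omega,
      show 4*k-2+1 = 4*k-1 from by omega]
  have hc : ((k-1 : ℕ) : ℝ) = (k : ℝ) - 1 := by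
    push_cast [hk1]; ring
  rw [hc]
  by_cases h : t k
  · rw [if_pos h] at hq ⊢; rw [hq.1, hq.2.1, hq.2.2.1]; ring
  · rw [if_neg h] at hq ⊢; rw [hq.1, hq.2.1, hq.2.2.1]; ring



/-- Lemma clause.
Let `p` be the consistent pricing induced by the truth assignment
`t : {1,…,n} → Bool`: for each `k`, the quadruples
`(e_{4k-3}, e_{4k-2}, e_{4k-1}, e_{4k})` and `(f_{4k-3}, f_{4k-2}, f_{4k-1}, f_{4k})`
are priced `(1,2,2,1)` if `t k = true` and `(2,1,1,2)` if `t k = false`, and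
`p(h) = mn²`.  Then each of the four clause customers can afford her bundle
iff the truth assignment satisfies the corresponding clause. -/
theorem clause_gadget
    (m n : ℕ) (hm : 1 ≤ m) (hn : 1 ≤ n)
    (t : ℕ → Bool) (i j : ℕ) (hi1 : 1 ≤ i) (hi2 : i ≤ n) (hj1 : 1 ≤ j) (hj2 : j ≤ n)
    (pe pf : ℕ → ℝ) (ph : ℝ)
    (hpe : ∀ k, 1 ≤ k → k ≤ n →
      if t k then
        pe (4 * k - 3) = 1 ∧ pe (4 * k - 2) = 2 ∧ pe (4 * k - 1) = 2 ∧ pe (4 * k) = 1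
      else
        pe (4 * k - 3) = 2 ∧ pe (4 * k - 2) = 1 ∧ pe (4 * k - 1) = 1 ∧ pe (4 * k) = 2)
    (hpf : ∀ k, 1 ≤ k → k ≤ n →
      if t k then
        pf (4 * k - 3) = 1 ∧ pf (4 * k - 2) = 2 ∧ pf (4 * k - 1) = 2 ∧ pf (4 * k) = 1
      else
        pf (4 * k - 3) = 2 ∧ pf (4 * k - 2) = 1 ∧ pf (4 * k - 1) = 1 ∧ pf (4 * k) = 2)
    (hph : ph = (m : ℝ) * (n : ℝ) ^ 2) :
    ((∑ l ∈ Finset.Icc 1 (4 * i - 3), pe l) + ph + ∑ l ∈ Finset.Icc 1 (4 * j - 3), pf l ≤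
        (m : ℝ) * (n : ℝ) ^ 2 + 6 * ((i : ℝ) + (j : ℝ) - 2) + 3 ↔
      t i = true ∨ t j = true) ∧
    ((∑ l ∈ Finset.Icc 1 (4 * i - 1), pe l) + ph + ∑ l ∈ Finset.Icc 1 (4 * j - 3), pf l ≤
        (m : ℝ) * (n : ℝ) ^ 2 + 6 * ((i : ℝ) + (j : ℝ) - 2) + 6 ↔
      t i = false ∨ t j = true) ∧
    ((∑ l ∈ Finset.Icc 1 (4 * i - 3), pe l) + ph + ∑ l ∈ Finset.Icc 1 (4 * j - 1), pf l ≤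
        (m : ℝ) * (n : ℝ) ^ 2 + 6 * ((i : ℝ) + (j : ℝ) - 2) + 6 ↔
      t i = true ∨ t j = false) ∧
    ((∑ l ∈ Finset.Icc 1 (4 * i - 1), pe l) + ph + ∑ l ∈ Finset.Icc 1 (4 * j - 1), pf l ≤
        (m : ℝ) * (n : ℝ) ^ 2 + 6 * ((i : ℝ) + (j : ℝ) - 2) + 9 ↔
      t i = false ∨ t j = false) := by
  rw [partial_sum3 n t pe hpe i hi1 hi2, partial_sum3 n t pf hpf j hj1 hj2,
      partial_sum1 n t pe hpe i hi1 hi2, partial_sum1 n t pf hpf j hj1 hj2, hph]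
  refine ⟨?_, ?_, ?_, ?_⟩ <;>
    rcases hti : t i <;> rcases htj : t j <;>
      simp only [hti, htj, if_true, if_false, Bool.false_eq_true, Bool.true_eq_false,
        or_self, or_true, true_or, or_false, false_or, iff_true, iff_false, not_le] <;>
      linarith
end

section
/- Consider a highway instance with edges 1, …, N on a line and customers j = 1, …, m with intervals I_j = {l_j, l_j+1, …, r_j} and budgets B_j ∈ ℝ, and suppose there is an index t with l_j ≤ t ≤ r_j for every j (all intervals share edge t). Then the supremum, over all pricings p : {1, …, N} → ℝ (negative prices allowed), of Σ_{j : Σ_{i=l_j}^{r_j} p(i) ≤ B_j} Σ_{i=l_j}^{r_j} p(i) equals the supremum, over all pairs of functions u : {1, …, t} → ℝ and w : {t, …, N} → ℝ, of Σ_{j : u(l_j)+w(r_j) ≤ B_j} (u(l_j) + w(r_j)). -/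
lemma tele_sum (f : ℕ → ℝ) (a b : ℕ) (h : a ≤ b) :
    ∑ i ∈ Finset.Ico a b, (f i - f (i + 1)) = f a - f b := by
  induction b, h using Nat.le_induction with
  | base => simp
  | succ n hn ih =>
      rw [Finset.sum_Ico_succ_top hn, ih]
      ring


/-- splitting a common edge in the coupon model.
In a highway instance on edges `1, …, N` with intervals `[l j, r j]` and budgets
`B j`, all sharing a common edge `t`, the supremum over all (possibly negative)
edge pricings `p` of the profit equals the supremum over all pairs of functions
`u, w` of the profit of the two-sided item pricing `u (l j) + w (r j)`. -/
theorem highway_common_edge_split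
    (N m : ℕ) (l r : Fin m → ℕ) (B : Fin m → ℝ)
    (hl : ∀ j, 1 ≤ l j) (hlr : ∀ j, l j ≤ r j) (hr : ∀ j, r j ≤ N)
    (t : ℕ) (ht1 : 1 ≤ t) (htN : t ≤ N) (ht : ∀ j, l j ≤ t ∧ t ≤ r j) :
    sSup {x : ℝ | ∃ p : ℕ → ℝ,
        x = ∑ j, pay (∑ i ∈ Finset.Icc (l j) (r j), p i) (B j)} =
      sSup {x : ℝ | ∃ u w : ℕ → ℝ,
        x = ∑ j, pay (u (l j) + w (r j)) (B j)} := by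
  congr 1
  ext x
  simp only [Set.mem_setOf_eq]
  constructor
  · rintro ⟨p, rfl⟩
    refine ⟨fun a => ∑ i ∈ Finset.Icc a t, p i,
            fun b => ∑ i ∈ Finset.Icc (t + 1) b, p i, ?_⟩
    refine Finset.sum_congr rfl fun j _ => ?_
    congr 1
    beta_reduce
    rw [← Finset.Ico_add_one_right_eq_Icc, ← Finset.Ico_add_one_right_eq_Icc, ← Finset.Ico_add_one_right_eq_Icc,
      ← Finset.sum_Ico_consecutive (f := p) (m := l j) (n := t + 1) (k := r j + 1)
        (by have := ht j; omega) (by have := ht j; omega)]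
  · rintro ⟨u, w, rfl⟩
    refine ⟨fun i => (if i ≤ t then u i else -w (i - 1)) -
      (if i + 1 ≤ t then u (i + 1) else -w (i + 1 - 1)), ?_⟩
    refine Finset.sum_congr rfl fun j _ => ?_
    congr 1
    beta_reduce
    rw [← Finset.Ico_add_one_right_eq_Icc,
      tele_sum (fun i => if i ≤ t then u i else -w (i - 1)) (l j) (r j + 1)
        (by have := hlr j; omega)]
    have h1 : l j ≤ t := (ht j).1
    have h2 : ¬ (r j + 1 ≤ t) := by have := (ht j).2; omega
    simp only [h1, if_pos, h2, if_neg, not_false_iff, Nat.add_sub_cancel]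
    ring
end
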